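/- Let n ≥ 1 be an integer and let x be a real number with 0 < x < π. Then ∑_{k=0}^{n} C(n-k+1, 1) · cos((k+1/2)x) = ∑_{k=0}^{n} (n-k+1) · cos((k+1/2)x) > -1/4. -/

import Mathlib

open Real Finset

lemma aux_tele (x : ℝ) (m : ℕ) :
    2 * Real.sin (x/2) * ∑ k ∈ Finset.range (m+1), Real.cos ((k + 1/2) * x)
      = Real.sin ((m+1) * x) := by
  have key : ∀ b h : ℝ, Real.sin (b + 2*h) = Real.sin b + 2 * Real.sin h * Real.cos (b + h) := by
    intro b h
    rw [Real.sin_add, Real.cos_add, Real.cos_two_mul, Real.sin_two_mul]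
    linear_combination 2 * Real.sin b * Real.sin_sq_add_cos_sq h
  induction m with
  | zero =>
      rw [Finset.sum_range_one]
      push_cast
      have h1 : ((0:ℝ) + 1/2) * x = x/2 := by ring
      have h2 : ((0:ℝ) + 1) * x = 2 * (x/2) := by ring
      rw [h1, h2, Real.sin_two_mul]
  | succ m ih =>
      rw [Finset.sum_range_succ, mul_add, ih]
      push_cast
      have e1 : ((m:ℝ) + 1 + 1) * x = ((m:ℝ)+1)*x + 2*(x/2) := by ring
      rw [e1, key (((m:ℝ)+1)*x) (x/2)]
      ring_nf

lemma aux_closed (x : ℝ) (n : ℕ) :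
    2 * Real.sin (x/2)^2 * ∑ k ∈ Finset.range (n+1), ((n : ℝ) - k + 1) * Real.cos ((k + 1/2) * x)
      = Real.sin (((n:ℝ)+1) * x / 2) * Real.sin (((n:ℝ)+2) * x / 2) := by
  induction n with
  | zero =>
      rw [Finset.sum_range_one]
      push_cast
      have h1 : ((0:ℝ) + 1/2) * x = x/2 := by ring
      have h2 : ((0:ℝ) + 1) * x / 2 = x/2 := by ring
      have h3 : ((0:ℝ) + 2) * x / 2 = 2 * (x/2) := by ring
      rw [h1, h2, h3, Real.sin_two_mul]
      ring
  | succ n ih =>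
      have split : ∑ k ∈ Finset.range (n+1+1), (((n:ℝ)+1) - k + 1) * Real.cos ((k + 1/2) * x)
          = (∑ k ∈ Finset.range (n+1), ((n : ℝ) - k + 1) * Real.cos ((k + 1/2) * x))
            + ∑ k ∈ Finset.range (n+1+1), Real.cos ((k + 1/2) * x) := by
        have hterm : ∀ k ∈ Finset.range (n+1+1), (((n:ℝ)+1) - k + 1) * Real.cos ((k + 1/2) * x)
            = ((n:ℝ) - k + 1) * Real.cos ((k + 1/2) * x) + Real.cos ((k + 1/2) * x) := by
          intro k _; ring
        rw [Finset.sum_congr rfl hterm, Finset.sum_add_distrib,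
          Finset.sum_range_succ (fun k : ℕ => ((n:ℝ) - k + 1) * Real.cos (((k:ℝ) + 1/2) * x)) (n+1)]
        push_cast
        ring_nf
        simp
        rw [add_comm]; congr 1; apply Finset.sum_congr rfl; intro k _; ring_nf
      have htele := aux_tele x (n+1)
      push_cast at htele ⊢
      rw [split, mul_add, ih]
      have key2 : Real.sin (((n:ℝ)+1)*x/2) * Real.sin (((n:ℝ)+2)*x/2)
            + Real.sin (x/2) * Real.sin (((n:ℝ)+1+1) * x)
          = Real.sin (((n:ℝ)+1+1)*x/2) * Real.sin (((n:ℝ)+1+2)*x/2) := by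
        have e1 : ((n:ℝ)+1)*x/2 = ((n:ℝ)+2)*x/2 - x/2 := by ring
        have e2 : ((n:ℝ)+1+1)*x = 2*(((n:ℝ)+2)*x/2) := by ring
        have e3 : ((n:ℝ)+1+2)*x/2 = ((n:ℝ)+2)*x/2 + x/2 := by ring
        have e4 : ((n:ℝ)+1+1)*x/2 = ((n:ℝ)+2)*x/2 := by ring
        rw [e4, e1, e3, e2, Real.sin_sub, Real.sin_add, Real.sin_two_mul]
        ring
      linear_combination key2 + Real.sin (x/2) * htele

theorem stmt_1 (n : ℕ) (hn : 1 ≤ n) (x : ℝ) (hx : 0 < x) (hx' : x < π) :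
    -1/4 < ∑ k ∈ Finset.range (n + 1), ((n : ℝ) - k + 1) * Real.cos ((k + 1/2) * x) := by
  have hpi := Real.pi_pos
  have hs : 0 < Real.sin (x/2) :=
    Real.sin_pos_of_pos_of_lt_pi (by linarith) (by linarith)
  have hc : 0 < Real.cos (x/2) :=
    Real.cos_pos_of_mem_Ioo ⟨by linarith, by linarith⟩
  have hsc := Real.sin_sq_add_cos_sq (x/2)
  have hc1 : Real.cos (x/2) < 1 := by nlinarith
  have hclosed := aux_closed x n
  set A := ((n:ℝ)+1) * x / 2
  set B := ((n:ℝ)+2) * x / 2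
  have hAB : Real.sin A * Real.sin B = (Real.cos (x/2) - Real.cos (A + B))/2 := by
    have e : x/2 = B - A := by simp [A, B]; ring
    rw [e, Real.cos_sub, Real.cos_add]
    ring
  have hge : Real.sin A * Real.sin B ≥ (Real.cos (x/2) - 1)/2 := by
    rw [hAB]
    have := Real.cos_le_one (A + B)
    linarith
  nlinarith [hclosed, hs, sq_nonneg (Real.sin (x/2))]
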